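/- There exist C ≥ 1 and r₀ ∈ (0,1) such that for all 0 < r < r₀: C⁻¹ r^{−11/3} ≤ ∫_{(0,1]²} (x₁³ r³ + (x₁² + x₂) r⁴ + x₁ r⁵ + r⁶)⁻¹ dx₁ dx₂ ≤ C r^{−11/3}. -/

import Mathlib

open MeasureTheory Set

open intervalIntegral in
lemma aux_int_Ioc_zero {e c : ℝ} (he : -1 < e) (hc : 0 ≤ c) :
    ∫ x in Set.Ioc (0:ℝ) c, x ^ e = c ^ (e + 1) / (e + 1) := by
  rw [← integral_of_le hc, integral_rpow (Or.inl he),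
    Real.zero_rpow (by linarith : e + 1 ≠ 0)]
  ring

open intervalIntegral in
lemma aux_intOn_Ioc_zero {e c : ℝ} (he : -1 < e) (hc : 0 ≤ c) :
    IntegrableOn (fun x : ℝ => x ^ e) (Set.Ioc (0:ℝ) c) := by
  have := intervalIntegrable_rpow' (a := 0) (b := c) he
  rwa [intervalIntegrable_iff, uIoc_of_le hc] at this

open intervalIntegral in
lemma aux_int_Ioc_t {t : ℝ} (ht : 0 < t) (ht1 : t ≤ 1) :
    ∫ x in Set.Ioc t 1, x ^ (-3 : ℝ) = (t ^ (-2:ℝ) - 1) / 2 := by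
  rw [← integral_of_le ht1, integral_rpow (Or.inr ⟨by norm_num, by
      simp only [Set.mem_uIcc]; push_neg
      constructor <;> intro h <;> linarith⟩)]
  norm_num [Real.one_rpow]
  ring

open intervalIntegral in
lemma aux_intOn_Ioc_t {t : ℝ} (ht : 0 < t) (ht1 : t ≤ 1) :
    IntegrableOn (fun x : ℝ => x ^ (-3 : ℝ)) (Set.Ioc t 1) := by
  have : IntervalIntegrable (fun x : ℝ => x ^ (-3:ℝ)) volume t 1 :=
    intervalIntegrable_rpow (Or.inr (by
      simp only [Set.mem_uIcc]; push_neg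
      constructor <;> intro h <;> linarith))
  rwa [intervalIntegrable_iff, uIoc_of_le ht1] at this

lemma aux_B_upper_den (r x y : ℝ) (hr : 0 < r) (hx0 : 0 < x) (hy0 : 0 < y) :
    x ^ 3 * r ^ 3 ≤ x ^ 3 * r ^ 3 + (x ^ 2 + y) * r ^ 4 + x * r ^ 5 + r ^ 6 := by
  nlinarith [mul_nonneg (mul_nonneg (sq_nonneg x) hr.le) (pow_nonneg hr.le 3),
    mul_nonneg hy0.le (pow_nonneg hr.le 4),
    mul_nonneg hx0.le (pow_nonneg hr.le 5), pow_nonneg hr.le 6]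

lemma aux_B_lower_den (r x y : ℝ) (hr : 0 < r) (hr1 : r < 1) (hrx : r < x)
    (hrx3 : r < x ^ 3) (hx0 : 0 < x) (hy1 : y ≤ 1) :
    x ^ 3 * r ^ 3 + (x ^ 2 + y) * r ^ 4 + x * r ^ 5 + r ^ 6 ≤ 5 * (x ^ 3 * r ^ 3) := by
  have q1 : x ^ 2 * r ^ 4 ≤ x ^ 3 * r ^ 3 := by
    nlinarith [mul_nonneg (mul_nonneg (sq_nonneg x) (pow_pos hr 3).le)
      (sub_nonneg.mpr hrx.le)]
  have q2 : y * r ^ 4 ≤ x ^ 3 * r ^ 3 := by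
    nlinarith [mul_nonneg (pow_pos hr 3).le (sub_nonneg.mpr hrx3.le),
      mul_nonneg (pow_pos hr 4).le (sub_nonneg.mpr hy1)]
  have q3 : x * r ^ 5 ≤ x ^ 3 * r ^ 3 := by
    nlinarith [mul_nonneg (mul_nonneg (mul_nonneg hx0.le (pow_pos hr 3).le)
      (sub_nonneg.mpr hrx.le)) (by positivity : (0:ℝ) ≤ x + r)]
  have q4 : r ^ 6 ≤ x ^ 3 * r ^ 3 := by
    have hr3r : r ^ 3 ≤ r := by nlinarith [hr.le, hr1.le, sq_nonneg r]
    nlinarith [mul_nonneg (pow_pos hr 3).le (sub_nonneg.mpr (hr3r.trans hrx3.le))]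
  linarith

lemma aux_A_key (r x y : ℝ) (hr : 0 < r) (hx0 : 0 < x) (hy0 : 0 < y) :
    x ^ ((1:ℝ)/2) * y ^ ((5:ℝ)/6) * r ^ ((23:ℝ)/6)
      ≤ x ^ 3 * r ^ 3 + (x ^ 2 + y) * r ^ 4 + x * r ^ 5 + r ^ 6 := by
  have h1 : (x ^ 3 * r ^ 3) ^ ((1:ℝ)/6) * (y * r ^ 4) ^ ((5:ℝ)/6)
      ≤ (1/6) * (x ^ 3 * r ^ 3) + (5/6) * (y * r ^ 4) :=
    Real.geom_mean_le_arith_mean2_weighted (by norm_num) (by norm_num)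
      (by positivity) (by positivity) (by norm_num)
  have h2 : (x ^ 3 * r ^ 3) ^ ((1:ℝ)/6) = x ^ ((1:ℝ)/2) * r ^ ((1:ℝ)/2) := by
    rw [show x ^ 3 * r ^ 3 = (x * r) ^ (3:ℕ) by ring, ← Real.rpow_natCast (x*r) 3,
      ← Real.rpow_mul (by positivity)]
    norm_num
    rw [Real.mul_rpow hx0.le hr.le]
  have h3 : (y * r ^ 4) ^ ((5:ℝ)/6) = y ^ ((5:ℝ)/6) * r ^ ((10:ℝ)/3) := by
    rw [Real.mul_rpow hy0.le (by positivity), ← Real.rpow_natCast r 4,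
      ← Real.rpow_mul hr.le]
    norm_num
  rw [h2, h3] at h1
  have h4 : x ^ ((1:ℝ)/2) * r ^ ((1:ℝ)/2) * (y ^ ((5:ℝ)/6) * r ^ ((10:ℝ)/3))
      = x ^ ((1:ℝ)/2) * y ^ ((5:ℝ)/6) * r ^ ((23:ℝ)/6) := by
    rw [show x ^ ((1:ℝ)/2) * r ^ ((1:ℝ)/2) * (y ^ ((5:ℝ)/6) * r ^ ((10:ℝ)/3))
        = x ^ ((1:ℝ)/2) * y ^ ((5:ℝ)/6) * (r ^ ((1:ℝ)/2) * r ^ ((10:ℝ)/3)) by ring,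
      ← Real.rpow_add hr]
    norm_num
  rw [h4] at h1
  have e1 : (0:ℝ) ≤ x ^ 3 * r ^ 3 := by positivity
  have e2 : (0:ℝ) ≤ x ^ 2 * r ^ 4 := by positivity
  have e3 : (0:ℝ) ≤ y * r ^ 4 := by positivity
  have e4 : (0:ℝ) ≤ x * r ^ 5 := by positivity
  have e5 : (0:ℝ) ≤ r ^ 6 := by positivity
  nlinarith [h1]

/-- `∫_{(0,1]²} (x₁³r³ + (x₁² + x₂)r⁴ + x₁r⁵ + r⁶)⁻¹ dx ≈ r^{−11/3}`
as `r → 0⁺`. -/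
theorem stmt18 :
    ∃ C : ℝ, 1 ≤ C ∧ ∃ r₀ : ℝ, 0 < r₀ ∧ r₀ < 1 ∧ ∀ r : ℝ, 0 < r → r < r₀ →
      C⁻¹ * r ^ (-(11/3) : ℝ) ≤
        (∫ x in (Set.Ioc (0:ℝ) 1) ×ˢ (Set.Ioc (0:ℝ) 1),
          (x.1 ^ 3 * r ^ 3 + (x.1 ^ 2 + x.2) * r ^ 4 + x.1 * r ^ 5 + r ^ 6)⁻¹) ∧
      (∫ x in (Set.Ioc (0:ℝ) 1) ×ˢ (Set.Ioc (0:ℝ) 1),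
          (x.1 ^ 3 * r ^ 3 + (x.1 ^ 2 + x.2) * r ^ 4 + x.1 * r ^ 5 + r ^ 6)⁻¹) ≤
        C * r ^ (-(11/3) : ℝ) := by
  refine ⟨20, by norm_num, 1/8, by norm_num, by norm_num, ?_⟩
  intro r hr hr8
  have hr1 : r < 1 := by linarith
  set t : ℝ := r ^ ((1:ℝ)/3) with htdef
  have ht0 : 0 < t := Real.rpow_pos_of_pos hr _
  have ht1 : t ≤ 1 := by
    calc t ≤ 1 ^ ((1:ℝ)/3) := Real.rpow_le_rpow hr.le hr1.le (by norm_num)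
    _ = 1 := Real.one_rpow _
  have ht3 : t ^ 3 = r := by
    rw [htdef, ← Real.rpow_natCast (r ^ ((1:ℝ)/3)) 3, ← Real.rpow_mul hr.le]
    norm_num
  have hrt : r ≤ t := by
    have h : r ^ (1:ℝ) ≤ r ^ ((1:ℝ)/3) :=
      Real.rpow_le_rpow_of_exponent_ge hr hr1.le (by norm_num)
    rw [Real.rpow_one] at h
    exact h
  set f : ℝ × ℝ → ℝ :=
    fun p => (p.1 ^ 3 * r ^ 3 + (p.1 ^ 2 + p.2) * r ^ 4 + p.1 * r ^ 5 + r ^ 6)⁻¹ with hfdef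
  have hfmeas : Measurable f := by fun_prop
  set A : Set (ℝ × ℝ) := Set.Ioc (0:ℝ) t ×ˢ Set.Ioc (0:ℝ) 1 with hAdef
  set B : Set (ℝ × ℝ) := Set.Ioc t 1 ×ˢ Set.Ioc (0:ℝ) 1 with hBdef
  have hAmeas : MeasurableSet A := measurableSet_Ioc.prod measurableSet_Ioc
  have hBmeas : MeasurableSet B := measurableSet_Ioc.prod measurableSet_Ioc
  have hS : (Set.Ioc (0:ℝ) 1) ×ˢ (Set.Ioc (0:ℝ) 1) = A ∪ B := by
    rw [hAdef, hBdef, ← Set.union_prod, Set.Ioc_union_Ioc_eq_Ioc ht0.le ht1]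
  have hdisj : Disjoint A B := by
    rw [Set.disjoint_left]
    rintro ⟨x, y⟩ hA hB
    exact absurd hA.1.2 (not_le.mpr hB.1.1)
  have hden : ∀ p : ℝ × ℝ, 0 < p.1 → 0 < p.2 →
      0 < p.1 ^ 3 * r ^ 3 + (p.1 ^ 2 + p.2) * r ^ 4 + p.1 * r ^ 5 + r ^ 6 := by
    rintro ⟨x, y⟩ hx hy
    dsimp only
    positivity
  have hfnonneg : ∀ p : ℝ × ℝ, 0 < p.1 → 0 < p.2 → 0 ≤ f p := fun p h1 h2 =>
    le_of_lt (inv_pos.mpr (hden p h1 h2))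
  -- some rpow arithmetic helpers
  have hX : (0:ℝ) < r ^ (-(11/3):ℝ) := Real.rpow_pos_of_pos hr _
  have hr3 : (r ^ 3)⁻¹ = r ^ (-3:ℝ) := by
    rw [← Real.rpow_natCast r 3, ← Real.rpow_neg hr.le]
    norm_num
  have hXY : r ^ (-3:ℝ) * t ^ (-2:ℝ) = r ^ (-(11/3):ℝ) := by
    rw [htdef, ← Real.rpow_mul hr.le, ← Real.rpow_add hr]
    norm_num
  have hYX : r ^ (-3:ℝ) ≤ (1/2) * r ^ (-(11/3):ℝ) := by
    have e1 : r ^ (-3:ℝ) = r ^ ((2:ℝ)/3) * r ^ (-(11/3):ℝ) := by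
      rw [← Real.rpow_add hr]; norm_num
    have e2 : r ^ ((2:ℝ)/3) ≤ (1/8:ℝ) ^ ((2:ℝ)/3) :=
      Real.rpow_le_rpow hr.le hr8.le (by norm_num)
    have e3 : ((1/8:ℝ)) ^ ((2:ℝ)/3) = 1/4 := by
      have e4 : ((1/8:ℝ)) ^ ((2:ℝ)/3) = (((1/2:ℝ)) ^ ((3:ℝ))) ^ ((2:ℝ)/3) := by
        rw [show ((1/2:ℝ)) ^ ((3:ℝ)) = (1/8:ℝ) from by
          rw [show (3:ℝ) = ((3:ℕ):ℝ) by norm_num, Real.rpow_natCast]; norm_num]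
      rw [e4, ← Real.rpow_mul (by norm_num)]
      rw [show (3:ℝ) * (2/3) = ((2:ℕ):ℝ) by norm_num, Real.rpow_natCast]
      norm_num
    rw [e1]
    nlinarith [hX]
  -- ===== Region A =====
  set gA : ℝ × ℝ → ℝ :=
    fun p => (r ^ (-(23/6):ℝ) * p.1 ^ (-(1/2):ℝ)) * p.2 ^ (-(5/6):ℝ) with hgAdef
  have hbA : ∀ p ∈ A, f p ≤ gA p := by
    rintro ⟨x, y⟩ hp
    obtain ⟨⟨hx0, hxt⟩, hy0, hy1⟩ := hp
    have key : x ^ ((1:ℝ)/2) * y ^ ((5:ℝ)/6) * r ^ ((23:ℝ)/6)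
        ≤ x ^ 3 * r ^ 3 + (x ^ 2 + y) * r ^ 4 + x * r ^ 5 + r ^ 6 :=
      aux_A_key r x y hr hx0 hy0
    have hpos : (0:ℝ) < x ^ ((1:ℝ)/2) * y ^ ((5:ℝ)/6) * r ^ ((23:ℝ)/6) := by positivity
    have hle := inv_anti₀ hpos key
    calc f (x, y) ≤ (x ^ ((1:ℝ)/2) * y ^ ((5:ℝ)/6) * r ^ ((23:ℝ)/6))⁻¹ := hle
      _ = gA (x, y) := by
        rw [hgAdef]
        dsimp only
        rw [Real.rpow_neg hr.le, Real.rpow_neg hx0.le, Real.rpow_neg hy0.le]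
        rw [mul_inv, mul_inv]
        ring_nf
  have hgA_int : IntegrableOn gA A := by
    have h1 : Integrable (fun x : ℝ => r ^ (-(23/6):ℝ) * x ^ (-(1/2):ℝ))
        (volume.restrict (Set.Ioc (0:ℝ) t)) :=
      (aux_intOn_Ioc_zero (by norm_num) ht0.le).const_mul _
    have h2 : Integrable (fun y : ℝ => y ^ (-(5/6):ℝ))
        (volume.restrict (Set.Ioc (0:ℝ) 1)) :=
      aux_intOn_Ioc_zero (by norm_num) zero_le_one
    have h3 := h1.mul_prod h2
    rw [Measure.prod_restrict] at h3
    rw [hAdef, hgAdef, IntegrableOn, Measure.volume_eq_prod]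
    exact h3
  have hgA_val : ∫ p in A, gA p = 12 * r ^ (-(11/3):ℝ) := by
    have i1 : ∫ x in Set.Ioc (0:ℝ) t, x ^ (-(1/2):ℝ) = 2 * t ^ ((1:ℝ)/2) := by
      rw [aux_int_Ioc_zero (by norm_num) ht0.le]
      norm_num
      ring
    have i2 : ∫ y in Set.Ioc (0:ℝ) 1, y ^ (-(5/6):ℝ) = 6 := by
      rw [aux_int_Ioc_zero (by norm_num) zero_le_one]
      norm_num
    have ht12 : t ^ ((1:ℝ)/2) = r ^ ((1:ℝ)/6) := by
      rw [htdef, ← Real.rpow_mul hr.le]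
      norm_num
    rw [hAdef, hgAdef, Measure.volume_eq_prod,
      setIntegral_prod_mul (fun x : ℝ => r ^ (-(23/6):ℝ) * x ^ (-(1/2):ℝ))
        (fun y : ℝ => y ^ (-(5/6):ℝ)), integral_const_mul _ _, i1, i2, ht12,
      show r ^ (-(23/6):ℝ) * (2 * r ^ ((1:ℝ)/6)) * 6
        = 12 * (r ^ (-(23/6):ℝ) * r ^ ((1:ℝ)/6)) by ring, ← Real.rpow_add hr]
    norm_num
  have hfA_int : IntegrableOn f A := by
    refine Integrable.mono hgA_int (hfmeas.aestronglyMeasurable.restrict) ?_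
    filter_upwards [ae_restrict_mem hAmeas] with p hp
    have h0f : 0 ≤ f p := hfnonneg p hp.1.1 hp.2.1
    have h0g : 0 ≤ gA p :=
      mul_nonneg (mul_nonneg (Real.rpow_nonneg hr.le _) (Real.rpow_nonneg hp.1.1.le _))
        (Real.rpow_nonneg hp.2.1.le _)
    rw [Real.norm_of_nonneg h0f, Real.norm_of_nonneg h0g]
    exact hbA p hp
  have hA_nonneg : 0 ≤ ∫ p in A, f p :=
    setIntegral_nonneg hAmeas (fun p hp => hfnonneg p hp.1.1 hp.2.1)
  have hA_upper : ∫ p in A, f p ≤ 12 * r ^ (-(11/3):ℝ) := by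
    rw [← hgA_val]
    exact setIntegral_mono_on hfA_int hgA_int hAmeas hbA
  -- ===== Region B =====
  set uB : ℝ × ℝ → ℝ := fun p => ((r ^ 3)⁻¹ * p.1 ^ (-3:ℝ)) * 1 with huBdef
  set lB : ℝ × ℝ → ℝ := fun p => ((5 * r ^ 3)⁻¹ * p.1 ^ (-3:ℝ)) * 1 with hlBdef
  have hxinv : ∀ x : ℝ, 0 < x → x ^ (-3:ℝ) = (x ^ 3)⁻¹ := by
    intro x hx
    rw [← Real.rpow_natCast x 3, ← Real.rpow_neg hx.le]
    norm_num
  have hbBu : ∀ p ∈ B, f p ≤ uB p := by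
    rintro ⟨x, y⟩ hp
    obtain ⟨⟨htx, hx1⟩, hy0, hy1⟩ := hp
    have hx0 : 0 < x := lt_trans ht0 htx
    have hD : x ^ 3 * r ^ 3 ≤ x ^ 3 * r ^ 3 + (x ^ 2 + y) * r ^ 4 + x * r ^ 5 + r ^ 6 :=
      aux_B_upper_den r x y hr hx0 hy0
    have hle := inv_anti₀ (by positivity : (0:ℝ) < x ^ 3 * r ^ 3) hD
    calc f (x, y) ≤ (x ^ 3 * r ^ 3)⁻¹ := hle
      _ = uB (x, y) := by
        rw [huBdef]; dsimp only
        rw [hxinv x hx0, mul_inv]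
        ring
  have hbBl : ∀ p ∈ B, lB p ≤ f p := by
    rintro ⟨x, y⟩ hp
    obtain ⟨⟨htx, hx1⟩, hy0, hy1⟩ := hp
    have hx0 : 0 < x := lt_trans ht0 htx
    have hrx : r < x := lt_of_le_of_lt hrt htx
    have hrx3 : r < x ^ 3 := by
      calc r = t ^ 3 := ht3.symm
      _ < x ^ 3 := pow_lt_pow_left₀ htx ht0.le (by norm_num)
    have hD : x ^ 3 * r ^ 3 + (x ^ 2 + y) * r ^ 4 + x * r ^ 5 + r ^ 6
        ≤ 5 * (x ^ 3 * r ^ 3) := aux_B_lower_den r x y hr hr1 hrx hrx3 hx0 hy1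
    have hle := inv_anti₀ (hden (x, y) hx0 hy0) hD
    calc lB (x, y) = (5 * (x ^ 3 * r ^ 3))⁻¹ := by
          rw [hlBdef]; dsimp only
          rw [hxinv x hx0, mul_inv, mul_inv]
          ring
      _ ≤ f (x, y) := hle
  have h1B : Integrable (fun y : ℝ => (1:ℝ)) (volume.restrict (Set.Ioc (0:ℝ) 1)) := by
    rw [← IntegrableOn]
    exact integrableOn_const measure_Ioc_lt_top.ne
  have huB_int : IntegrableOn uB B := by
    have h1 : Integrable (fun x : ℝ => (r ^ 3)⁻¹ * x ^ (-3:ℝ))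
        (volume.restrict (Set.Ioc t 1)) := (aux_intOn_Ioc_t ht0 ht1).const_mul _
    have h3 := h1.mul_prod h1B
    rw [Measure.prod_restrict] at h3
    rw [hBdef, huBdef, IntegrableOn, Measure.volume_eq_prod]
    exact h3
  have hlB_int : IntegrableOn lB B := by
    have h1 : Integrable (fun x : ℝ => (5 * r ^ 3)⁻¹ * x ^ (-3:ℝ))
        (volume.restrict (Set.Ioc t 1)) := (aux_intOn_Ioc_t ht0 ht1).const_mul _
    have h3 := h1.mul_prod h1B
    rw [Measure.prod_restrict] at h3
    rw [hBdef, hlBdef, IntegrableOn, Measure.volume_eq_prod]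
    exact h3
  have hone : ∫ y in Set.Ioc (0:ℝ) 1, (1:ℝ) = 1 := by
    rw [setIntegral_const]
    simp [Real.volume_Ioc]
  have huB_val : ∫ p in B, uB p = (r ^ 3)⁻¹ * ((t ^ (-2:ℝ) - 1) / 2) := by
    rw [hBdef, huBdef, Measure.volume_eq_prod,
      setIntegral_prod_mul (fun x : ℝ => (r ^ 3)⁻¹ * x ^ (-3:ℝ)) (fun _ : ℝ => (1:ℝ)),
      integral_const_mul _ _, aux_int_Ioc_t ht0 ht1, hone]
    ring
  have hlB_val : ∫ p in B, lB p = (5 * r ^ 3)⁻¹ * ((t ^ (-2:ℝ) - 1) / 2) := by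
    rw [hBdef, hlBdef, Measure.volume_eq_prod,
      setIntegral_prod_mul (fun x : ℝ => (5 * r ^ 3)⁻¹ * x ^ (-3:ℝ)) (fun _ : ℝ => (1:ℝ)),
      integral_const_mul _ _, aux_int_Ioc_t ht0 ht1, hone]
    ring
  have hfB_int : IntegrableOn f B := by
    refine Integrable.mono huB_int (hfmeas.aestronglyMeasurable.restrict) ?_
    filter_upwards [ae_restrict_mem hBmeas] with p hp
    have hx0 : 0 < p.1 := lt_trans ht0 hp.1.1
    have h0f : 0 ≤ f p := hfnonneg p hx0 hp.2.1
    have h0g : 0 ≤ uB p := by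
      rw [huBdef]; dsimp only
      rw [hxinv p.1 hx0]
      positivity
    rw [Real.norm_of_nonneg h0f, Real.norm_of_nonneg h0g]
    exact hbBu p hp
  have hB_upper : ∫ p in B, f p ≤ (r ^ 3)⁻¹ * ((t ^ (-2:ℝ) - 1) / 2) := by
    rw [← huB_val]
    exact setIntegral_mono_on hfB_int huB_int hBmeas hbBu
  have hB_lower : (5 * r ^ 3)⁻¹ * ((t ^ (-2:ℝ) - 1) / 2) ≤ ∫ p in B, f p := by
    rw [← hlB_val]
    exact setIntegral_mono_on hlB_int hfB_int hBmeas hbBl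
  -- ===== Combine =====
  have hsplit : (∫ p in (Set.Ioc (0:ℝ) 1) ×ˢ (Set.Ioc (0:ℝ) 1), f p)
      = (∫ p in A, f p) + ∫ p in B, f p := by
    rw [hS]
    exact setIntegral_union hdisj hBmeas hfA_int hfB_int
  have ht2pos : (0:ℝ) < t ^ (-2:ℝ) := Real.rpow_pos_of_pos ht0 _
  have hkey : (r ^ 3)⁻¹ * ((t ^ (-2:ℝ) - 1) / 2)
      = (r ^ (-(11/3):ℝ) - r ^ (-3:ℝ)) / 2 := by
    rw [hr3, ← hXY]
    ring
  constructor
  · -- lower bound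
    rw [hsplit]
    have : (5 * r ^ 3)⁻¹ * ((t ^ (-2:ℝ) - 1) / 2)
        = (r ^ (-(11/3):ℝ) - r ^ (-3:ℝ)) / 10 := by
      rw [mul_inv, mul_assoc, hkey]
      ring
    rw [this] at hB_lower
    have h20 : (20:ℝ)⁻¹ * r ^ (-(11/3):ℝ) ≤ (r ^ (-(11/3):ℝ) - r ^ (-3:ℝ)) / 10 := by
      linarith [hYX, hX]
    linarith
  · -- upper bound
    rw [hsplit]
    rw [hkey] at hB_upper
    have hY0 : (0:ℝ) < r ^ (-3:ℝ) := Real.rpow_pos_of_pos hr _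
    linarith [hA_upper, hB_upper, hX, hY0]
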